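/- Let σ ∈ S_n be an n-cycle and let p be an integer with d = gcd(p, n). Then σ^p is conjugate in S_n to an element of the Young subgroup S_{n-k} × S_k (permutations preserving the partition {1,...,n-k} ∪ {n-k+1,...,n}) if and only if n/d divides k. -/

import Mathlib

lemma aux_dvd {α : Type*} [DecidableEq α] (τ : Equiv.Perm α) (m : ℕ) (hm : 0 < m)
    (hfree : ∀ (x : α) (j : ℕ), 0 < j → j < m → (τ ^ j) x ≠ x)
    (hord : ∀ x : α, (τ ^ m) x = x) :
    ∀ T : Finset α, (∀ x, τ x ∈ T ↔ x ∈ T) → m ∣ T.card := by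
  intro T
  induction T using Finset.strongInduction with
  | _ T ih =>
    intro hT
    rcases T.eq_empty_or_nonempty with rfl | ⟨x, hx⟩
    · simp
    · have key : ∀ a b : ℕ, a < b → b < m → (τ ^ a) x ≠ (τ ^ b) x := by
        intro a b hab hbm h
        have h2 : (τ ^ a) ((τ ^ (b - a)) x) = (τ ^ a) x := by
          rw [← Equiv.Perm.mul_apply, ← pow_add, show a + (b - a) = b by omega]
          exact h.symm
        exact hfree x (b - a) (by omega) (by omega) ((τ ^ a).injective h2)
      have horbmem : ∀ j : ℕ, (τ ^ j) x ∈ T := by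
        intro j
        induction j with
        | zero => simpa using hx
        | succ j hj =>
          rw [pow_succ']
          exact (hT _).mpr hj
      set O : Finset α := Finset.image (fun j : Fin m => (τ ^ (j : ℕ)) x) Finset.univ with hO
      have hinj : Function.Injective (fun j : Fin m => (τ ^ (j : ℕ)) x) := by
        intro i j hij
        rcases lt_trichotomy (i : ℕ) (j : ℕ) with h | h | h
        · exact absurd hij (key _ _ h j.2)
        · exact Fin.ext h
        · exact absurd hij.symm (key _ _ h i.2)
      have hcardO : O.card = m := by
        rw [hO, Finset.card_image_of_injective _ hinj, Finset.card_univ, Fintype.card_fin]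
      have hOT : O ⊆ T := by
        intro y hy
        rw [hO] at hy
        obtain ⟨j, -, rfl⟩ := Finset.mem_image.mp hy
        exact horbmem _
      have hmemO : ∀ j : ℕ, j < m → (τ ^ j) x ∈ O := by
        intro j hj
        exact Finset.mem_image.mpr ⟨⟨j, hj⟩, Finset.mem_univ _, rfl⟩
      have hxO : x ∈ O := by simpa using hmemO 0 hm
      have hT' : ∀ y, τ y ∈ T \ O ↔ y ∈ T \ O := by
        intro y
        simp only [Finset.mem_sdiff]
        constructor
        · rintro ⟨h1, h2⟩
          refine ⟨(hT y).mp h1, fun hy => ?_⟩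
          obtain ⟨j, -, rfl⟩ := Finset.mem_image.mp hy
          apply h2
          have heq : τ ((τ ^ (j : ℕ)) x) = (τ ^ ((j : ℕ) + 1)) x := by
            rw [pow_succ']; rfl
          rw [heq]
          by_cases hc : (j : ℕ) + 1 = m
          · rw [hc, hord x]; exact hxO
          · exact hmemO _ (by have := j.2; omega)
        · rintro ⟨h1, h2⟩
          refine ⟨(hT y).mpr h1, fun hy => ?_⟩
          obtain ⟨j, -, hj⟩ := Finset.mem_image.mp hy
          apply h2
          rcases Nat.eq_zero_or_pos (j : ℕ) with h0 | h0
          · rw [h0] at hj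
            simp only [pow_zero, Equiv.Perm.coe_one, id_eq] at hj
            have heq : τ ((τ ^ (m - 1)) x) = τ y := by
              have : τ ((τ ^ (m - 1)) x) = (τ ^ m) x := by
                conv_rhs => rw [show m = (m - 1) + 1 by omega]
                rw [pow_succ']; rfl
              rw [this, hord, hj]
            rw [← τ.injective heq]
            exact hmemO _ (by omega)
          · have heq : τ ((τ ^ ((j : ℕ) - 1)) x) = τ y := by
              have : τ ((τ ^ ((j : ℕ) - 1)) x) = (τ ^ (j : ℕ)) x := by
                conv_rhs => rw [show (j : ℕ) = ((j : ℕ) - 1) + 1 by omega]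
                rw [pow_succ']; rfl
              rw [this, hj]
            rw [← τ.injective heq]
            exact hmemO _ (by have := j.2; omega)
      have hss : T \ O ⊂ T := Finset.sdiff_ssubset hOT ⟨x, hxO⟩
      have hdvd := ih _ hss hT'
      rw [Finset.card_sdiff_of_subset hOT, hcardO] at hdvd
      have hle : m ≤ T.card := hcardO ▸ Finset.card_le_card hOT
      obtain ⟨c, hc⟩ := hdvd
      refine ⟨c + 1, ?_⟩
      rw [Nat.mul_succ, ← hc]
      omega

lemma exists_perm_of_card_eq {α : Type*} [Fintype α] [DecidableEq α] (T S : Finset α)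
    (h : T.card = S.card) : ∃ g : Equiv.Perm α, ∀ x, g x ∈ S ↔ x ∈ T := by
  have e1 : {x // x ∈ T} ≃ {x // x ∈ S} :=
    Fintype.equivOfCardEq (by simpa [Fintype.card_coe] using h)
  have e2 : {x // ¬ x ∈ T} ≃ {x // ¬ x ∈ S} :=
    Fintype.equivOfCardEq (by
      simp only [Fintype.card_subtype_compl, Fintype.card_coe]
      rw [h])
  refine ⟨(Equiv.sumCompl (· ∈ T)).symm.trans ((e1.sumCongr e2).trans
    (Equiv.sumCompl (· ∈ S))), fun x => ?_⟩
  by_cases hx : x ∈ T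
  · rw [Equiv.trans_apply, Equiv.trans_apply, Equiv.sumCompl_symm_apply_of_pos hx]
    simp only [Equiv.sumCongr_apply, Sum.map_inl, Equiv.sumCompl_apply_inl]
    exact iff_of_true (e1 ⟨x, hx⟩).2 hx
  · rw [Equiv.trans_apply, Equiv.trans_apply, Equiv.sumCompl_symm_apply_of_neg hx]
    simp only [Equiv.sumCongr_apply, Sum.map_inr, Equiv.sumCompl_apply_inr]
    exact iff_of_false (e2 ⟨x, hx⟩).2 hx

lemma card_range_filter (d m t : ℕ) (hd : 0 < d) (ht : t ≤ d) :
    ((Finset.range (d * m)).filter (fun i => i % d < t)).card = m * t := by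
  rw [show m * t = ((Finset.range m) ×ˢ (Finset.range t)).card by
    rw [Finset.card_product, Finset.card_range, Finset.card_range]]
  apply Finset.card_nbij' (fun i => (i / d, i % d)) (fun p => p.2 + p.1 * d)
  · intro a ha
    simp only [Finset.mem_coe, Finset.mem_filter, Finset.mem_range] at ha
    simp only [Finset.mem_coe, Finset.mem_product, Finset.mem_range]
    exact ⟨Nat.div_lt_of_lt_mul (mul_comm d m ▸ ha.1), ha.2⟩
  · intro p hp
    simp only [Finset.mem_coe, Finset.mem_product, Finset.mem_range] at hp
    simp only [Finset.mem_coe, Finset.mem_filter, Finset.mem_range]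
    constructor
    · calc p.2 + p.1 * d < d + p.1 * d := by omega
        _ = (p.1 + 1) * d := by ring
        _ ≤ m * d := Nat.mul_le_mul_right d hp.1
        _ = d * m := mul_comm _ _
    · rw [Nat.add_mul_mod_self_right, Nat.mod_eq_of_lt (by omega)]
      exact hp.2
  · intro a ha
    simp only
    rw [Nat.mod_add_div']
  · intro p hp
    simp only [Finset.mem_coe, Finset.mem_product, Finset.mem_range] at hp
    have h2 : (p.2 + p.1 * d) % d = p.2 := by
      rw [Nat.add_mul_mod_self_right, Nat.mod_eq_of_lt (by omega)]
    have h1 : (p.2 + p.1 * d) / d = p.1 := by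
      rw [Nat.add_mul_div_right _ _ hd, Nat.div_eq_of_lt (by omega)]
      omega
    beta_reduce
    rw [h1, h2]

lemma card_zmod_filter (n : ℕ) [NeZero n] (d t : ℕ) :
    (Finset.univ.filter (fun x : ZMod n => x.val % d < t)).card
      = ((Finset.range n).filter (fun i => i % d < t)).card := by
  refine Finset.card_nbij' (i := fun x : ZMod n => x.val) (j := fun i => (i : ZMod n)) ?_ ?_ ?_ ?_
  · intro a ha
    simp only [Finset.mem_coe, Finset.mem_filter, Finset.mem_univ, true_and] at ha
    simp only [Finset.mem_coe, Finset.mem_filter, Finset.mem_range]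
    exact ⟨ZMod.val_lt a, ha⟩
  · intro a ha
    simp only [Finset.mem_coe, Finset.mem_filter, Finset.mem_range] at ha
    simp only [Finset.mem_coe, Finset.mem_filter, Finset.mem_univ, true_and]
    rw [ZMod.val_natCast_of_lt ha.1]
    exact ha.2
  · intro a _
    simp [ZMod.natCast_val, ZMod.cast_id]
  · intro i hi
    simp only [Finset.mem_coe, Finset.mem_filter, Finset.mem_range] at hi
    simp only
    rw [ZMod.val_natCast_of_lt hi.1]

lemma invariant_zsmul {A : Type*} [AddCommGroup A] [DecidableEq A] (U : Finset A) (b : A)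
    (h : ∀ x, x + b ∈ U ↔ x ∈ U) : ∀ (c : ℤ) (x : A), x + c • b ∈ U ↔ x ∈ U := by
  intro c
  induction c using Int.induction_on with
  | zero => simp
  | succ i ih =>
    intro x
    have : x + ((i : ℤ) + 1) • b = (x + (i : ℤ) • b) + b := by
      rw [add_smul, one_smul, add_assoc]
    rw [this, h, ih]
  | pred i ih =>
    intro x
    have : x + (-(i : ℤ)) • b = (x + (-(i : ℤ) - 1) • b) + b := by
      rw [sub_smul, one_smul]; abel
    rw [← h (x + (-(i : ℤ) - 1) • b), ← this, ih]

lemma zmod_forward (n : ℕ) [NeZero n] (a : ZMod n) (U : Finset (ZMod n))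
    (hU : ∀ x, x + a ∈ U ↔ x ∈ U) : addOrderOf a ∣ U.card := by
  have hm : 0 < addOrderOf a := addOrderOf_pos a
  apply aux_dvd (Equiv.addRight a) (addOrderOf a) hm
  · intro x j hj hjm hx
    simp only [Equiv.nsmul_addRight, Equiv.coe_addRight] at hx
    have : j • a = 0 := by
      have := add_left_cancel (a := x) (b := j • a) (c := 0) (by rw [hx, add_zero])
      exact this
    exact absurd (addOrderOf_dvd_of_nsmul_eq_zero this) (by intro hdvd; exact absurd (Nat.le_of_dvd hj hdvd) (by omega))
  · intro x
    simp only [Equiv.nsmul_addRight, Equiv.coe_addRight]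
    rw [addOrderOf_nsmul_eq_zero, add_zero]
  · intro x
    simpa using hU x

lemma zmod_backward (n d m t : ℕ) [NeZero n] (hn : n = d * m) (hd : 0 < d) (ht : t ≤ d)
    (p : ℤ) (hdp : (d : ℤ) ∣ p) :
    ∃ U : Finset (ZMod n), U.card = m * t ∧ ∀ x : ZMod n, x + (p : ZMod n) ∈ U ↔ x ∈ U := by
  have hdn : d ∣ n := ⟨m, hn⟩
  refine ⟨Finset.univ.filter (fun x : ZMod n => x.val % d < t), ?_, ?_⟩
  · rw [card_zmod_filter n d t, hn, card_range_filter d m t hd ht]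
  · have hmod : ∀ x : ZMod n, (x + (d : ZMod n)).val % d = x.val % d := by
      intro x
      rw [ZMod.val_add, ZMod.val_natCast, Nat.mod_mod_of_dvd _ hdn, Nat.add_mod,
        Nat.mod_mod_of_dvd d hdn, Nat.mod_self, Nat.add_zero, Nat.mod_mod_of_dvd x.val (dvd_refl d)]
    have hinv : ∀ x : ZMod n, x + (d : ZMod n) ∈ Finset.univ.filter (fun x : ZMod n => x.val % d < t)
        ↔ x ∈ Finset.univ.filter (fun x : ZMod n => x.val % d < t) := by
      intro x
      simp only [Finset.mem_filter, Finset.mem_univ, true_and, hmod]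
    obtain ⟨c, rfl⟩ := hdp
    have hcast : ((d * c : ℤ) : ZMod n) = c • ((d : ℕ) : ZMod n) := by
      rw [zsmul_eq_mul]
      push_cast
      ring
    intro x
    rw [hcast]
    exact invariant_zsmul _ _ hinv c x

/-- The Young subgroup `S_{n-k} × S_k ≤ S_n` of permutations preserving the
partition of `{0, ..., n-1}` into the first `n - k` and the last `k` letters. -/
def YoungSubgroup (n k : ℕ) : Subgroup (Equiv.Perm (Fin n)) where
  carrier := {g | ∀ i : Fin n, ((g i : ℕ) < n - k ↔ (i : ℕ) < n - k)}
  one_mem' := fun _ => Iff.rfl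
  mul_mem' := by
    intro g h hg hh i
    simpa [Equiv.Perm.mul_apply] using (hg (h i)).trans (hh i)
  inv_mem' := by
    intro g hg i
    simpa using (hg (g⁻¹ i)).symm

theorem statement4 (n k : ℕ) (hk : k ≤ n)
    (σ : Equiv.Perm (Fin n)) (hσ : σ.IsCycle) (hsupp : σ.support.card = n)
    (p : ℤ) :
    (∃ g : Equiv.Perm (Fin n), g * σ ^ p * g⁻¹ ∈ YoungSubgroup n k) ↔
      n / Int.gcd p n ∣ k := by

  classical
  have h2 : 2 ≤ n := hsupp ▸ hσ.two_le_card_support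
  haveI : NeZero n := ⟨by omega⟩
  have huniv : σ.support = Finset.univ :=
    Finset.eq_univ_of_card _ (by simp [hsupp])
  have horderσ : orderOf σ = n := by rw [hσ.orderOf, hsupp]
  set d : ℕ := Int.gcd p n with hd
  have hd0 : 0 < d := Int.gcd_pos_iff.mpr (Or.inr (Int.natCast_ne_zero.mpr (by omega)))
  have hdn : d ∣ n := Int.natCast_dvd_natCast.mp (Int.gcd_dvd_right _ _)
  set m' : ℕ := n / d with hm'
  have hnm : n = d * m' := (Nat.mul_div_cancel' hdn).symm
  have hm'0 : 0 < m' := Nat.div_pos (Nat.le_of_dvd (by omega) hdn) hd0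
  set aa : ZMod n := ((p : ℤ) : ZMod n) with haa
  -- order of aa
  have horder : addOrderOf aa = m' := by
    have hgcd : n.gcd p.natAbs = d := by
      rw [Nat.gcd_comm]; rfl
    rcases Int.natAbs_eq p with hp | hp
    · rw [haa, hp]
      rw [Int.cast_natCast, ZMod.addOrderOf_coe _ (NeZero.ne n), hgcd]
    · rw [haa, hp]
      rw [Int.cast_neg, Int.cast_natCast, addOrderOf_neg,
        ZMod.addOrderOf_coe _ (NeZero.ne n), hgcd]
  -- freeness of σ
  have hfreeσ : ∀ (x : Fin n) (j : ℕ), (σ ^ j) x = x → n ∣ j := by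
    intro x j hj
    have hx : σ x ≠ x :=
      Equiv.Perm.mem_support.mp (huniv ▸ Finset.mem_univ x)
    exact horderσ ▸ orderOf_dvd_of_pow_eq_one ((hσ.pow_eq_one_iff' hx).mpr hj)
  -- zpow congruence
  have hzeq : ∀ b c : ℤ, ((b : ZMod n) = (c : ZMod n)) → σ ^ b = σ ^ c := by
    intro b c h
    rw [zpow_eq_zpow_iff_modEq, horderσ]
    exact (ZMod.intCast_eq_intCast_iff _ _ _).mp h
  -- the basepoint bijection
  have hne : (0 : ℕ) < n := by omega
  set x0 : Fin n := ⟨0, hne⟩ with hx0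
  set f : ZMod n → Fin n := fun i => (σ ^ i.val) x0 with hf
  have hfinj : Function.Injective f := by
    have key : ∀ a b : ℕ, a ≤ b → b < n → (σ ^ a) x0 = (σ ^ b) x0 → a = b := by
      intro a b hab hbn h
      have h2 : (σ ^ a) ((σ ^ (b - a)) x0) = (σ ^ a) x0 := by
        rw [← Equiv.Perm.mul_apply, ← pow_add, show a + (b - a) = b by omega]
        exact h.symm
      have := hfreeσ x0 (b - a) ((σ ^ a).injective h2)
      have hba : b - a < n := by omega
      have : b - a = 0 := Nat.eq_zero_of_dvd_of_lt this hba
      omega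
    intro i j hij
    have hv : i.val = j.val := by
      rcases le_total i.val j.val with h | h
      · exact key _ _ h (ZMod.val_lt j) hij
      · exact (key _ _ h (ZMod.val_lt i) hij.symm).symm
    exact ZMod.val_injective n hv
  have hfbij : Function.Bijective f :=
    (Fintype.bijective_iff_injective_and_card f).mpr ⟨hfinj, by simp [ZMod.card]⟩
  set e : ZMod n ≃ Fin n := Equiv.ofBijective f hfbij with he
  have heapp : ∀ i, e i = f i := fun i => rfl
  -- commutation
  have hcomm : ∀ i : ZMod n, (σ ^ p) (e i) = e (i + aa) := by
    intro i
    rw [heapp, heapp, hf]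
    show (σ ^ p) ((σ ^ (i.val : ℕ)) x0) = (σ ^ ((i + aa).val : ℕ)) x0
    rw [← zpow_natCast σ i.val, ← zpow_natCast σ (i + aa).val,
      ← Equiv.Perm.mul_apply, ← zpow_add]
    congr 1
    apply hzeq
    push_cast [ZMod.natCast_val, ZMod.cast_id]
    ring
  -- the reference set S
  set S : Finset (Fin n) := Finset.univ.filter (fun i : Fin n => (i : ℕ) < n - k) with hS
  have hSmem : ∀ i : Fin n, i ∈ S ↔ (i : ℕ) < n - k := by
    intro i; simp [hS]
  have hScard : S.card = n - k := by
    rw [show n - k = (Finset.range (n - k)).card by simp]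
    refine Finset.card_bij' (fun (a : Fin n) _ => (a : ℕ))
      (fun b hb => (⟨b, by simp only [Finset.mem_range] at hb; omega⟩ : Fin n))
      (fun a ha => ?_) (fun b hb => ?_) (fun a ha => rfl) (fun b hb => rfl)
    · rw [Finset.mem_range]
      exact (hSmem a).mp ha
    · exact (hSmem _).mpr (by simpa using hb)
  have hYoung : ∀ τ : Equiv.Perm (Fin n),
      τ ∈ YoungSubgroup n k ↔ ∀ i : Fin n, ((τ i : ℕ) < n - k ↔ (i : ℕ) < n - k) :=
    fun τ => Iff.rfl
  -- master equivalence
  have master : (∃ g : Equiv.Perm (Fin n), g * σ ^ p * g⁻¹ ∈ YoungSubgroup n k) ↔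
      (∃ U : Finset (ZMod n), U.card = n - k ∧ ∀ x : ZMod n, x + aa ∈ U ↔ x ∈ U) := by
    constructor
    · rintro ⟨g, hg⟩
      rw [hYoung] at hg
      refine ⟨(S.image ⇑g⁻¹).image ⇑e.symm, ?_, ?_⟩
      · rw [Finset.card_image_of_injective _ e.symm.injective,
          Finset.card_image_of_injective _ (Equiv.injective g⁻¹), hScard]
      · intro x
        have hmem : ∀ y : ZMod n, y ∈ (S.image ⇑g⁻¹).image ⇑e.symm ↔ g (e y) ∈ S := by
          intro y
          simp only [Finset.mem_image]
          constructor
          · rintro ⟨z, ⟨w, hw, rfl⟩, rfl⟩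
            simpa using hw
          · intro hy
            exact ⟨e y, ⟨g (e y), hy, by simp⟩, by simp⟩
        rw [hmem, hmem]
        have : g (e (x + aa)) = (g * σ ^ p * g⁻¹) (g (e x)) := by
          simp only [Equiv.Perm.mul_apply, Equiv.Perm.inv_def, Equiv.symm_apply_apply]
          rw [hcomm]
        rw [this, hSmem, hSmem, hg]
    · rintro ⟨U, hUcard, hUinv⟩
      obtain ⟨g, hg⟩ := exists_perm_of_card_eq (U.image ⇑e) S
        (by rw [Finset.card_image_of_injective _ e.injective, hUcard, hScard])
      have hmem3 : ∀ z : Fin n, z ∈ U.image ⇑e ↔ e.symm z ∈ U := by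
        intro z
        simp only [Finset.mem_image]
        constructor
        · rintro ⟨w, hw, rfl⟩
          simpa using hw
        · intro hz; exact ⟨e.symm z, hz, by simp⟩
      refine ⟨g, (hYoung _).mpr ?_⟩
      intro i
      rw [← hSmem, ← hSmem]
      have h1 : (g * σ ^ p * g⁻¹) i = g ((σ ^ p) (g⁻¹ i)) := rfl
      rw [h1]
      set y : Fin n := g⁻¹ i with hy
      have hi' : i = g y := by rw [hy]; simp
      have step1 : (σ ^ p) y = e (e.symm y + aa) := by
        conv_lhs => rw [show y = e (e.symm y) by simp]
        rw [hcomm]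
      rw [step1, hi', hg, hg, hmem3, hmem3, Equiv.symm_apply_apply]
      exact hUinv _
  rw [master]
  constructor
  · rintro ⟨U, hUcard, hUinv⟩
    have hdvd : m' ∣ n - k := by
      have := zmod_forward n aa U hUinv
      rwa [horder, hUcard] at this
    have hm'n : m' ∣ n := ⟨d, by rw [hnm, mul_comm]⟩
    have : m' ∣ n - (n - k) := Nat.dvd_sub hm'n hdvd
    rwa [Nat.sub_sub_self hk] at this
  · intro hdvd
    have hdvd' : m' ∣ n - k := Nat.dvd_sub ⟨d, by rw [hnm, mul_comm]⟩ hdvd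
    set t : ℕ := (n - k) / m' with htdef
    have htm : n - k = m' * t := (Nat.mul_div_cancel' hdvd').symm
    have htd : t ≤ d := by
      have : t ≤ n / m' := by
        rw [htdef]
        exact Nat.div_le_div_right (by omega)
      have hnd : n / m' = d := by
        rw [hnm, Nat.mul_div_cancel _ hm'0]
      omega
    obtain ⟨U, hU1, hU2⟩ := zmod_backward n d m' t hnm hd0 htd p (Int.gcd_dvd_left _ _)
    exact ⟨U, hU1.trans htm.symm, hU2⟩
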